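/- The dimension of the ℂ-linear span of the path tensors {ψ(i,e) : i ∈ Fin d, e ∈ E^i} equals |E| − (Σ_{i ∈ Fin d} w i) + 1, where |E| = Σ_{i ∈ Fin d} w i · w (i+1). -/

import Mathlib

open scoped BigOperators

attribute [local instance] Classical.propDecidable

namespace ABP

variable {d : ℕ} [NeZero d]

/-- The set of edges in layer `i` of a (cyclic / trace) ABP of width format `w`:
an edge `(a, b)` goes from vertex `a` of layer `i` to vertex `b` of layer `i + 1`
(layer indices modulo `d`). -/
abbrev Edge (w : Fin d → ℕ) (i : Fin d) : Type := Fin (w i) × Fin (w (i + 1))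

/-- An edge tuple is a valid path if consecutive edges match (cyclically). -/
def ValidPath (w : Fin d → ℕ) (p : ∀ i : Fin d, Edge w i) : Prop :=
  ∀ i : Fin d, (p i).2 = (p (i + 1)).1

/-- An edge is parity preserving if its two endpoints have the same parity. -/
def ParityPres {w : Fin d → ℕ} {i : Fin d} (e : Edge w i) : Prop :=
  e.1.val % 2 = e.2.val % 2

/-- The number of parity-preserving edges of an edge tuple. -/
noncomputable def ppCount (w : Fin d → ℕ) (p : ∀ i : Fin d, Edge w i) : ℕ :=
  (Finset.univ.filter fun i : Fin d => ParityPres (p i)).card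

/-- The tensor `f_com`: value 1 on valid paths, 0 elsewhere. -/
noncomputable def fcom (w : Fin d → ℕ) : (∀ i : Fin d, Edge w i) → ℂ :=
  fun p => if ValidPath w p then 1 else 0

/-- The tensor `f_0`: value 1 on valid paths containing exactly one
parity-preserving edge, 0 elsewhere. -/
noncomputable def f0 (w : Fin d → ℕ) : (∀ i : Fin d, Edge w i) → ℂ :=
  fun p => if ValidPath w p ∧ ppCount w p = 1 then 1 else 0

/-- The action of a tuple of matrices `g i : E^i → E^i → ℂ` on a tensor:
`((⊗ᵢ gᵢ) f)(p) = Σ_q (Πᵢ gᵢ (p i) (q i)) · f q`. -/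
noncomputable def actT (w : Fin d → ℕ) (g : ∀ i : Fin d, Edge w i → Edge w i → ℂ)
    (f : (∀ i : Fin d, Edge w i) → ℂ) : (∀ i : Fin d, Edge w i) → ℂ :=
  fun p => ∑ q : ∀ i : Fin d, Edge w i, (∏ i : Fin d, g i (p i) (q i)) * f q

end ABP

namespace ABP

/-- The path tensor `ψ(i,e)`: value 1 on valid paths whose `i`-th edge is `e`,
0 elsewhere. -/
noncomputable def psi {d : ℕ} [NeZero d] (w : Fin d → ℕ) (i : Fin d) (e : Edge w i) :
    (∀ i : Fin d, Edge w i) → ℂ :=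
  fun p => if ValidPath w p ∧ p i = e then 1 else 0

end ABP


namespace ABPAux
open ABP Module

variable {d : ℕ} [NeZero d] (w : Fin d → ℕ)

def z (hw : ∀ i, 0 < w i) (i : Fin d) : Fin (w i) := ⟨0, hw i⟩

noncomputable def Theta (hw : ∀ i, 0 < w i) :
    (∀ i : Fin d, Fin (w i) → ℂ) →ₗ[ℂ] ((Σ i : Fin d, Edge w i) → ℂ) where
  toFun A := fun x => A x.1 x.2.1 - A (x.1 + 1) x.2.2 + A (x.1 + 1) (z w hw (x.1 + 1))
  map_add' A B := by funext x; simp only [Pi.add_apply]; ring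
  map_smul' t A := by funext x; simp only [Pi.smul_apply, smul_eq_mul, RingHom.id_apply]; ring

@[simp] lemma theta_apply (hw : ∀ i, 0 < w i) (A) (x : Σ i : Fin d, Edge w i) :
    Theta w hw A x = A x.1 x.2.1 - A (x.1 + 1) x.2.2 + A (x.1 + 1) (z w hw (x.1 + 1)) := rfl

noncomputable def L (hw : ∀ i, 0 < w i) : (∀ i : Fin d, Fin (w i) → ℂ) →ₗ[ℂ] ℂ where
  toFun A := ∑ i, A i (z w hw i)
  map_add' A B := by simp [Finset.sum_add_distrib]
  map_smul' t A := by simp [Finset.mul_sum]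

@[simp] lemma L_apply (hw : ∀ i, 0 < w i) (A) : L w hw A = ∑ i, A i (z w hw i) := rfl

end ABPAux

namespace ABPAux
open ABP Module
set_option linter.unusedSectionVars false

variable {d : ℕ} [NeZero d] (w : Fin d → ℕ)

lemma sum_psi_apply (c : (Σ i : Fin d, Edge w i) → ℂ) (p : ∀ i : Fin d, Edge w i) :
    (Fintype.linearCombination ℂ fun x : Σ i : Fin d, Edge w i => psi w x.1 x.2) c p
      = if ValidPath w p then ∑ i : Fin d, c ⟨i, p i⟩ else 0 := by
  classical
  rw [Fintype.linearCombination_apply]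
  simp only [Finset.sum_apply, Pi.smul_apply, smul_eq_mul]
  rw [← Finset.univ_sigma_univ, Finset.sum_sigma]
  by_cases h : ValidPath w p
  · simp [psi, h, Finset.sum_ite_eq]
  · simp [psi, h]

lemma mem_ker_iff (c : (Σ i : Fin d, Edge w i) → ℂ) :
    c ∈ LinearMap.ker (Fintype.linearCombination ℂ
        fun x : Σ i : Fin d, Edge w i => psi w x.1 x.2)
      ↔ ∀ v : ∀ j : Fin d, Fin (w j), ∑ j : Fin d, c ⟨j, (v j, v (j + 1))⟩ = 0 := by
  rw [LinearMap.mem_ker, funext_iff]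
  constructor
  · intro h v
    have hv := h (fun j => (v j, v (j + 1)))
    rw [sum_psi_apply, Pi.zero_apply, if_pos (show ValidPath w _ from fun _ => rfl)] at hv
    exact hv
  · intro h p
    rw [sum_psi_apply, Pi.zero_apply]
    by_cases hp : ValidPath w p
    · rw [if_pos hp]
      have hpv : ∀ j, p j = ((fun j => (p j).1) j, (fun j => (p j).1) (j + 1)) :=
        fun j => Prod.ext rfl (hp j)
      calc ∑ j : Fin d, c ⟨j, p j⟩
          = ∑ j : Fin d, c ⟨j, ((fun j => (p j).1) j, (fun j => (p j).1) (j + 1))⟩ := by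
            exact Finset.sum_congr rfl fun j _ => by rw [← hpv j]
        _ = 0 := h _
    · rw [if_neg hp]

end ABPAux

namespace ABPAux
open ABP Module
set_option linter.unusedSectionVars false

variable {d : ℕ} [NeZero d] (w : Fin d → ℕ)

lemma theta_inj (hw : ∀ i, 0 < w i) : Function.Injective (Theta w hw) := by
  rw [← LinearMap.ker_eq_bot]
  ext A
  simp only [LinearMap.mem_ker, Submodule.mem_bot]
  constructor
  · intro h
    funext i x
    have h2 := congrFun h ⟨i, (x, z w hw (i + 1))⟩
    simpa using h2
  · rintro rfl; simp

lemma theta_mem_ker (hw : ∀ i, 0 < w i) (A : ∀ i : Fin d, Fin (w i) → ℂ)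
    (hA : ∑ i : Fin d, A i (z w hw i) = 0) (v : ∀ j : Fin d, Fin (w j)) :
    ∑ j : Fin d, Theta w hw A ⟨j, (v j, v (j + 1))⟩ = 0 := by
  simp only [theta_apply]
  rw [Finset.sum_add_distrib, Finset.sum_sub_distrib]
  have h1 : ∑ j : Fin d, A (j + 1) (v (j + 1)) = ∑ j : Fin d, A j (v j) :=
    Fintype.sum_equiv (Equiv.addRight 1) _ _ (fun j => rfl)
  have h2 : ∑ j : Fin d, A (j + 1) (z w hw (j + 1)) = ∑ j : Fin d, A j (z w hw j) :=
    Fintype.sum_equiv (Equiv.addRight 1) _ _ (fun j => rfl)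
  rw [h1, h2, hA, sub_self, zero_add]

lemma hne1 (hd : 2 ≤ d) (j : Fin d) : j + 1 ≠ j := by
  intro h
  have h1 : (1 : Fin d) = 0 := add_left_cancel (h.trans (add_zero j).symm)
  have := congrArg Fin.val h1
  rw [Fin.val_one', Nat.mod_eq_of_lt (by omega)] at this
  simp at this

lemma hne2 (hd : 3 ≤ d) (j : Fin d) : j + 1 + 1 ≠ j := by
  intro h
  have h' : j + (1 + 1) = j + 0 := by rw [add_zero, ← add_assoc]; exact h
  have h1 : (1 + 1 : Fin d) = 0 := add_left_cancel h'
  have := congrArg Fin.val h1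
  rw [Fin.val_add, Fin.val_one', Nat.mod_eq_of_lt (show 1 < d by omega),
    Nat.mod_eq_of_lt (show 1 + 1 < d by omega)] at this
  simp at this

lemma key (hd : 3 ≤ d) (hw : ∀ i, 0 < w i) (c : (Σ i : Fin d, Edge w i) → ℂ)
    (hc : ∀ v : ∀ j : Fin d, Fin (w j), ∑ j : Fin d, c ⟨j, (v j, v (j + 1))⟩ = 0)
    (i : Fin d) (a : Fin (w i)) (b : Fin (w (i + 1))) :
    c ⟨i, (a, b)⟩ = c ⟨i, (a, z w hw (i + 1))⟩ - c ⟨i + 1, (b, z w hw (i + 1 + 1))⟩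
      + c ⟨i + 1, (z w hw (i + 1), z w hw (i + 1 + 1))⟩ := by
  classical
  have hd2 : 2 ≤ d := by omega
  set v1 : ∀ j : Fin d, Fin (w j) := fun j =>
    if h : j = i then Fin.cast (congrArg w h.symm) a
    else if h' : j = i + 1 then Fin.cast (congrArg w h'.symm) b
    else z w hw j with hv1
  set v2 : ∀ j : Fin d, Fin (w j) := fun j =>
    if h : j = i then Fin.cast (congrArg w h.symm) a else z w hw j with hv2
  have e1i : v1 i = a := by apply Fin.ext; simp [hv1]
  have e1i1 : v1 (i + 1) = b := by apply Fin.ext; simp [hv1, hne1 hd2 i]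
  have e1i2 : v1 (i + 1 + 1) = z w hw (i + 1 + 1) := by
    apply Fin.ext; simp [hv1, hne2 hd i, hne1 hd2 (i + 1), z]
  have e2i : v2 i = a := by apply Fin.ext; simp [hv2]
  have e2i1 : v2 (i + 1) = z w hw (i + 1) := by
    apply Fin.ext; simp [hv2, hne1 hd2 i, z]
  have e2i2 : v2 (i + 1 + 1) = z w hw (i + 1 + 1) := by
    apply Fin.ext; simp [hv2, hne2 hd i, z]
  have Hsum : ∑ j : Fin d,
      (c ⟨j, (v1 j, v1 (j + 1))⟩ - c ⟨j, (v2 j, v2 (j + 1))⟩) = 0 := by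
    rw [Finset.sum_sub_distrib, hc v1, hc v2, sub_zero]
  have Hsupp : ∀ j ∈ (Finset.univ : Finset (Fin d)), j ∉ ({i, i + 1} : Finset (Fin d)) →
      c ⟨j, (v1 j, v1 (j + 1))⟩ - c ⟨j, (v2 j, v2 (j + 1))⟩ = 0 := by
    intro j _ hj
    simp only [Finset.mem_insert, Finset.mem_singleton, not_or] at hj
    have h1 : v1 j = v2 j := by simp [hv1, hv2, hj.1, hj.2]
    have h2 : v1 (j + 1) = v2 (j + 1) := by
      by_cases h : j + 1 = i
      · simp [hv1, hv2, h]
      · by_cases h' : j + 1 = i + 1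
        · exact absurd (add_right_cancel h') hj.1
        · simp [hv1, hv2, h, h']
    rw [h1, h2, sub_self]
  have Hpair : (c ⟨i, (v1 i, v1 (i + 1))⟩ - c ⟨i, (v2 i, v2 (i + 1))⟩)
      + (c ⟨i + 1, (v1 (i + 1), v1 (i + 1 + 1))⟩ - c ⟨i + 1, (v2 (i + 1), v2 (i + 1 + 1))⟩)
      = 0 := by
    have h2 : ∑ j ∈ ({i, i + 1} : Finset (Fin d)),
        (c ⟨j, (v1 j, v1 (j + 1))⟩ - c ⟨j, (v2 j, v2 (j + 1))⟩) = 0 := by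
      rw [Finset.sum_subset (Finset.subset_univ _) Hsupp]
      exact Hsum
    rwa [Finset.sum_pair (hne1 hd2 i).symm] at h2
  rw [e1i, e1i1, e1i2, e2i, e2i1, e2i2] at Hpair
  linear_combination Hpair

end ABPAux


namespace ABPAux
open ABP Module
set_option linter.unusedSectionVars false

variable {d : ℕ} [NeZero d] (w : Fin d → ℕ)

lemma ker_eq (hd : 3 ≤ d) (hw : ∀ i, 0 < w i) :
    LinearMap.ker (Fintype.linearCombination ℂ
        (fun x : Σ i : Fin d, Edge w i => psi w x.1 x.2))
      = Submodule.map (Theta w hw) (LinearMap.ker (L w hw)) := by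
  ext c
  rw [mem_ker_iff, Submodule.mem_map]
  constructor
  · intro hc
    refine ⟨fun i a => c ⟨i, (a, z w hw (i + 1))⟩, ?_, ?_⟩
    · rw [LinearMap.mem_ker, L_apply]
      exact hc (z w hw)
    · funext x
      obtain ⟨i, a, b⟩ := x
      rw [theta_apply]
      exact (key w hd hw c hc i a b).symm
  · rintro ⟨A, hA, rfl⟩
    intro v
    exact theta_mem_ker w hw A (by rw [LinearMap.mem_ker, L_apply] at hA; exact hA) v

end ABPAux

/-- The dimension of the span of the path tensors
`{ψ(i,e)}` equals `|E| − Σᵢ w i + 1`, where `|E| = Σᵢ w i · w (i+1)`. -/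
theorem psi_span_dim (d : ℕ) [NeZero d] (hd3 : 3 ≤ d) (hodd : Odd d)
    (w : Fin d → ℕ) (hw : ∀ i, 2 ≤ w i) :
    Module.finrank ℂ (Submodule.span ℂ
        (Set.range fun x : Σ i : Fin d, ABP.Edge w i => ABP.psi w x.1 x.2)) =
      (∑ i : Fin d, w i * w (i + 1)) - (∑ i : Fin d, w i) + 1 := by
  classical
  have hw1 : ∀ i, 0 < w i := fun i => lt_of_lt_of_le two_pos (hw i)
  rw [← Fintype.range_linearCombination (R := ℂ)
    (v := fun x : Σ i : Fin d, ABP.Edge w i => ABP.psi w x.1 x.2)]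
  set Φ := Fintype.linearCombination ℂ
    (fun x : Σ i : Fin d, ABP.Edge w i => ABP.psi w x.1 x.2) with hΦ
  have hrn := LinearMap.finrank_range_add_finrank_ker Φ
  have hdom : Module.finrank ℂ ((Σ i : Fin d, ABP.Edge w i) → ℂ)
      = ∑ i : Fin d, w i * w (i + 1) := by
    rw [Module.finrank_pi, Fintype.card_sigma]
    simp
  have hN : Module.finrank ℂ (∀ i : Fin d, Fin (w i) → ℂ) = ∑ i : Fin d, w i := by
    rw [Module.finrank_pi_fintype]
    simp
  have hLker : Module.finrank ℂ (LinearMap.ker (ABPAux.L w hw1))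
      = (∑ i : Fin d, w i) - 1 := by
    have h1 := LinearMap.finrank_range_add_finrank_ker (ABPAux.L w hw1)
    have hsurj : LinearMap.range (ABPAux.L w hw1) = ⊤ := by
      rw [LinearMap.range_eq_top]
      intro t
      refine ⟨fun i _ => if i = (0 : Fin d) then t else 0, ?_⟩
      simp [ABPAux.L_apply, Finset.sum_ite_eq']
    rw [hsurj, finrank_top, Module.finrank_self, hN] at h1
    omega
  have hker : Module.finrank ℂ (LinearMap.ker Φ) = (∑ i : Fin d, w i) - 1 := by
    rw [hΦ, ABPAux.ker_eq w hd3 hw1,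
      ← LinearEquiv.finrank_eq (Submodule.equivMapOfInjective _
        (ABPAux.theta_inj w hw1) (LinearMap.ker (ABPAux.L w hw1)))]
    exact hLker
  rw [hdom, hker] at hrn
  have hle : (∑ i : Fin d, w i) ≤ ∑ i : Fin d, w i * w (i + 1) :=
    Finset.sum_le_sum fun i _ => Nat.le_mul_of_pos_right _ (hw1 (i + 1))
  have hpos : 0 < ∑ i : Fin d, w i :=
    Finset.sum_pos (fun i _ => hw1 i) Finset.univ_nonempty
  omega
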